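/- In the TGL disk configuration, the angular position θ₁ of the exit point varies with the disk radius according to ∂θ₁/∂r = tan(ν₁)/r, where ν₁ is the angle between the outward radial direction at the exit point and the tangent direction of the curve there; similarly ∂θ₂/∂r = tan(ν₂)/r. -/

import Mathlib

open Metric Set Filter MeasureTheory Real RealInnerProductSpace

noncomputable section

/-- Rotation by `π/2` in the plane. -/
def rot (v : EuclideanSpace ℝ (Fin 2)) : EuclideanSpace ℝ (Fin 2) :=
  WithLp.toLp 2 ![-(v 1), v 0]

/-- The integral area invariant `g(s,r) = area(Ω ∩ D(γ s, r))`. -/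
def areaInv (Ω : Set (EuclideanSpace ℝ (Fin 2))) (γ : ℝ → EuclideanSpace ℝ (Fin 2))
    (s r : ℝ) : ℝ :=
  (volume (Ω ∩ closedBall (γ s) r)).toReal

/-- Tangentially graph-like at `γ s` with radius `r`. -/
def TGLAt (Ω : Set (EuclideanSpace ℝ (Fin 2))) (γ : ℝ → EuclideanSpace ℝ (Fin 2))
    (r s : ℝ) : Prop :=
  DifferentiableAt ℝ γ s ∧
  ∀ u ∈ frontier Ω ∩ closedBall (γ s) r,
    ∀ v ∈ frontier Ω ∩ closedBall (γ s) r, u ≠ v → ⟪deriv γ s, u - v⟫ ≠ 0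

lemma key18 (θ a b : ℝ → ℝ) (r δ k c ν : ℝ) (hr : 0 < r) (hδ : 0 < δ)
    (hev : ∀ ρ ∈ Set.Ioo (r - δ) (r + δ), θ ρ = k + Real.arctan (b ρ / a ρ))
    (hab : ∀ ρ ∈ Set.Ioo (r - δ) (r + δ), a ρ ^ 2 + b ρ ^ 2 = ρ ^ 2)
    (har : a r = r * Real.cos (θ r)) (hbr : b r = r * Real.sin (θ r))
    (hcos : Real.cos (θ r) ≠ 0)
    (ha : HasDerivAt a (c * Real.cos (θ r + ν)) r)
    (hb : HasDerivAt b (c * Real.sin (θ r + ν)) r) :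
    HasDerivAt θ (Real.tan ν / r) r := by
  have hrmem : r ∈ Set.Ioo (r - δ) (r + δ) := ⟨by linarith, by linarith⟩
  have hnb : Set.Ioo (r - δ) (r + δ) ∈ nhds r := Ioo_mem_nhds hrmem.1 hrmem.2
  have hrne : r ≠ 0 := hr.ne'
  have ha0 : a r ≠ 0 := by rw [har]; exact mul_ne_zero hrne hcos
  have hsq : HasDerivAt (fun ρ => a ρ ^ 2 + b ρ ^ 2)
      (2 * a r * (c * Real.cos (θ r + ν)) + 2 * b r * (c * Real.sin (θ r + ν))) r := by
    have h1 := (ha.pow 2).add (hb.pow 2)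
    refine h1.congr_deriv ?_; ring
  have hsq' : HasDerivAt (fun ρ => a ρ ^ 2 + b ρ ^ 2) (2 * r) r := by
    have heq : (fun ρ : ℝ => a ρ ^ 2 + b ρ ^ 2) =ᶠ[nhds r] fun ρ : ℝ => ρ ^ 2 :=
      Filter.eventuallyEq_of_mem hnb fun ρ hρ => hab ρ hρ
    have h2 : HasDerivAt (fun ρ : ℝ => ρ ^ 2) (2 * r) r := by
      simpa using hasDerivAt_pow 2 r
    exact HasDerivAt.congr_of_eventuallyEq h2 heq
  have hexp : Real.cos (θ r) * Real.cos (θ r + ν) + Real.sin (θ r) * Real.sin (θ r + ν)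
      = Real.cos ν := by
    have h := Real.cos_sub (θ r + ν) (θ r)
    rw [show θ r + ν - θ r = ν by ring] at h
    linear_combination -h
  have hkey : c * Real.cos ν = 1 := by
    have huniq := hsq.unique hsq'
    rw [har, hbr] at huniq
    have h2r : (2:ℝ) * r ≠ 0 := by positivity
    refine mul_left_cancel₀ h2r ?_
    linear_combination huniq - 2 * r * c * hexp
  have hcν : Real.cos ν ≠ 0 := fun h => by simp [h] at hkey
  have hnum : Real.sin (θ r + ν) * Real.cos (θ r) - Real.sin (θ r) * Real.cos (θ r + ν)
      = Real.sin ν := by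
    have h := Real.sin_sub (θ r + ν) (θ r)
    rw [show θ r + ν - θ r = ν by ring] at h
    linear_combination -h
  have hq : HasDerivAt (fun ρ => b ρ / a ρ)
      ((c * Real.sin (θ r + ν) * a r - b r * (c * Real.cos (θ r + ν))) / a r ^ 2) r :=
    hb.div ha ha0
  have harctan := (Real.hasDerivAt_arctan (b r / a r)).comp r hq
  have hθ' := harctan.const_add k
  have hfinal : HasDerivAt θ (1 / (1 + (b r / a r) ^ 2) *
      ((c * Real.sin (θ r + ν) * a r - b r * (c * Real.cos (θ r + ν))) / a r ^ 2)) r := by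
    refine HasDerivAt.congr_of_eventuallyEq hθ' ?_
    exact Filter.eventuallyEq_of_mem hnb hev
  convert hfinal using 1
  have hden : 1 + (b r / a r) ^ 2 = 1 / Real.cos (θ r) ^ 2 := by
    rw [har, hbr]
    field_simp
    linear_combination Real.sin_sq_add_cos_sq (θ r)
  have hN : c * Real.sin (θ r + ν) * a r - b r * (c * Real.cos (θ r + ν))
      = c * r * Real.sin ν := by
    rw [har, hbr]; linear_combination c * r * hnum
  have htanν : Real.tan ν = c * Real.sin ν := by
    rw [Real.tan_eq_sin_div_cos]
    field_simp
    linear_combination -Real.sin ν * hkey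
  rw [hden, hN, har, htanν]
  field_simp

/-- The angular positions of the intersection points vary with the radius according to
`∂θ₁/∂r = tan(ν₁)/r` and `∂θ₂/∂r = tan(ν₂)/r`. -/
theorem statement18
    (Ω : Set (EuclideanSpace ℝ (Fin 2))) (hΩ : IsCompact Ω)
    (L : ℝ) (hL : 0 < L)
    (γ : ℝ → EuclideanSpace ℝ (Fin 2))
    (hC2 : ContDiff ℝ 2 γ)
    (harc : ∀ t, ‖deriv γ t‖ = 1)
    (himg : γ '' Set.Icc 0 L = frontier Ω)
    (hclosed : γ 0 = γ L)
    (hinj : Set.InjOn γ (Set.Ico 0 L))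
    (s r δ : ℝ) (hr : 0 < r) (hδ : 0 < δ) (hδr : δ < r)
    -- γ is TGL for all radii near r:
    (hTGL : ∀ ρ ∈ Set.Ioo (r - δ) (r + δ), ∀ t ∈ Set.Icc 0 L, TGLAt Ω γ ρ t)
    (θ₁ θ₂ sPlus sMinus : ℝ → ℝ)
    -- θ₁ ρ and θ₂ ρ are the angular positions, in the tangent frame at γ s, of the
    -- exit point γ (sPlus ρ) and entry point γ (sMinus ρ) on the circle C(γ s, ρ):
    (hθ₁ : ∀ ρ ∈ Set.Ioo (r - δ) (r + δ), θ₁ ρ ∈ Set.Ioo (-(π/2)) (π/2))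
    (hθ₂ : ∀ ρ ∈ Set.Ioo (r - δ) (r + δ), θ₂ ρ ∈ Set.Ioo (π/2) (3*π/2))
    (hexit : ∀ ρ ∈ Set.Ioo (r - δ) (r + δ),
      γ (sPlus ρ) = γ s + (ρ * Real.cos (θ₁ ρ)) • deriv γ s
        + (ρ * Real.sin (θ₁ ρ)) • rot (deriv γ s) ∧
      γ (sPlus ρ) ∈ frontier Ω ∩ sphere (γ s) ρ)
    (hentry : ∀ ρ ∈ Set.Ioo (r - δ) (r + δ),
      γ (sMinus ρ) = γ s + (ρ * Real.cos (θ₂ ρ)) • deriv γ s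
        + (ρ * Real.sin (θ₂ ρ)) • rot (deriv γ s) ∧
      γ (sMinus ρ) ∈ frontier Ω ∩ sphere (γ s) ρ)
    (hsP : DifferentiableAt ℝ sPlus r) (hsM : DifferentiableAt ℝ sMinus r)
    (ν₁ ν₂ : ℝ) (hν₁ : ν₁ ∈ Set.Ioo (-(π/2)) (π/2)) (hν₂ : ν₂ ∈ Set.Ioo (-(π/2)) (π/2))
    -- ν₁ (resp. ν₂) is the angle between the outward radial direction at the exit
    -- (resp. entry) point and the curve's tangent direction there:
    (htan₁ : deriv γ (sPlus r) =
      Real.cos (θ₁ r + ν₁) • deriv γ s + Real.sin (θ₁ r + ν₁) • rot (deriv γ s))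
    (htan₂ : deriv γ (sMinus r) =
      -(Real.cos (θ₂ r + ν₂) • deriv γ s + Real.sin (θ₂ r + ν₂) • rot (deriv γ s))) :
    HasDerivAt θ₁ (Real.tan ν₁ / r) r ∧ HasDerivAt θ₂ (Real.tan ν₂ / r) r := by
  have hrmem : r ∈ Set.Ioo (r - δ) (r + δ) := ⟨by linarith, by linarith⟩
  set e₁ := deriv γ s with he₁
  set e₂ := rot (deriv γ s) with he₂
  have hγdiff : Differentiable ℝ γ := hC2.differentiable (by norm_num)
  have h11 : ⟪e₁, e₁⟫ = 1 := by
    rw [real_inner_self_eq_norm_sq, harc s]; norm_num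
  have h12 : ⟪e₁, e₂⟫ = 0 := by
    simp only [he₂, he₁, rot, PiLp.toLp_apply, PiLp.inner_apply, Fin.sum_univ_two, RCLike.inner_apply,
      conj_trivial, Matrix.cons_val_zero, Matrix.cons_val_one, Matrix.head_cons]
    ring
  have h21 : ⟪e₂, e₁⟫ = 0 := by rw [real_inner_comm]; exact h12
  have h22 : ⟪e₂, e₂⟫ = 1 := by
    have h : ⟪e₂, e₂⟫ = ⟪e₁, e₁⟫ := by
      simp only [he₂, he₁, rot, PiLp.toLp_apply, PiLp.inner_apply, Fin.sum_univ_two, RCLike.inner_apply,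
        conj_trivial, Matrix.cons_val_zero, Matrix.cons_val_one, Matrix.head_cons]
      ring
    rw [h, h11]
  have hip1 : ∀ x y : ℝ, ⟪e₁, x • e₁ + y • e₂⟫ = x := by
    intro x y
    rw [inner_add_right, real_inner_smul_right, real_inner_smul_right, h11, h12]; ring
  have hip2 : ∀ x y : ℝ, ⟪e₂, x • e₁ + y • e₂⟫ = y := by
    intro x y
    rw [inner_add_right, real_inner_smul_right, real_inner_smul_right, h21, h22]; ring
  constructor
  · -- exit point
    set A : ℝ → ℝ := fun ρ => ⟪e₁, γ (sPlus ρ) - γ s⟫ with hA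
    set B : ℝ → ℝ := fun ρ => ⟪e₂, γ (sPlus ρ) - γ s⟫ with hB
    have hdiffpt : ∀ ρ ∈ Set.Ioo (r - δ) (r + δ),
        γ (sPlus ρ) - γ s = (ρ * Real.cos (θ₁ ρ)) • e₁ + (ρ * Real.sin (θ₁ ρ)) • e₂ := by
      intro ρ hρ
      rw [(hexit ρ hρ).1]; abel
    have hAB : ∀ ρ ∈ Set.Ioo (r - δ) (r + δ),
        A ρ = ρ * Real.cos (θ₁ ρ) ∧ B ρ = ρ * Real.sin (θ₁ ρ) := by
      intro ρ hρ
      constructor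
      · show ⟪e₁, γ (sPlus ρ) - γ s⟫ = _
        rw [hdiffpt ρ hρ]; exact hip1 _ _
      · show ⟪e₂, γ (sPlus ρ) - γ s⟫ = _
        rw [hdiffpt ρ hρ]; exact hip2 _ _
    have hF : HasDerivAt (fun ρ => γ (sPlus ρ) - γ s)
        (deriv sPlus r • deriv γ (sPlus r)) r :=
      ((hγdiff (sPlus r)).hasDerivAt.scomp r hsP.hasDerivAt).sub_const _
    have hAd : HasDerivAt A (deriv sPlus r * Real.cos (θ₁ r + ν₁)) r := by
      have h := (hasDerivAt_const r e₁).inner ℝ hF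
      refine h.congr_deriv ?_
      rw [inner_zero_left, add_zero, real_inner_smul_right, htan₁, hip1]
    have hBd : HasDerivAt B (deriv sPlus r * Real.sin (θ₁ r + ν₁)) r := by
      have h := (hasDerivAt_const r e₂).inner ℝ hF
      refine h.congr_deriv ?_
      rw [inner_zero_left, add_zero, real_inner_smul_right, htan₁, hip2]
    have hev : ∀ ρ ∈ Set.Ioo (r - δ) (r + δ), θ₁ ρ = 0 + Real.arctan (B ρ / A ρ) := by
      intro ρ hρ
      obtain ⟨hA', hB'⟩ := hAB ρ hρ
      have hρpos : (0:ℝ) < ρ := by have := hρ.1; linarith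
      have hcρ : 0 < Real.cos (θ₁ ρ) := Real.cos_pos_of_mem_Ioo (hθ₁ ρ hρ)
      rw [zero_add, hA', hB',
        show ρ * Real.sin (θ₁ ρ) / (ρ * Real.cos (θ₁ ρ)) = Real.tan (θ₁ ρ) by
          rw [Real.tan_eq_sin_div_cos]; field_simp,
        Real.arctan_tan (hθ₁ ρ hρ).1 (hθ₁ ρ hρ).2]
    have habsq : ∀ ρ ∈ Set.Ioo (r - δ) (r + δ), A ρ ^ 2 + B ρ ^ 2 = ρ ^ 2 := by
      intro ρ hρ
      obtain ⟨hA', hB'⟩ := hAB ρ hρ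
      rw [hA', hB']
      linear_combination ρ ^ 2 * Real.sin_sq_add_cos_sq (θ₁ ρ)
    have hcos : Real.cos (θ₁ r) ≠ 0 := (Real.cos_pos_of_mem_Ioo (hθ₁ r hrmem)).ne'
    exact key18 θ₁ A B r δ 0 (deriv sPlus r) ν₁ hr hδ hev habsq
      (hAB r hrmem).1 (hAB r hrmem).2 hcos hAd hBd
  · -- entry point
    set A : ℝ → ℝ := fun ρ => ⟪e₁, γ (sMinus ρ) - γ s⟫ with hA
    set B : ℝ → ℝ := fun ρ => ⟪e₂, γ (sMinus ρ) - γ s⟫ with hB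
    have hdiffpt : ∀ ρ ∈ Set.Ioo (r - δ) (r + δ),
        γ (sMinus ρ) - γ s = (ρ * Real.cos (θ₂ ρ)) • e₁ + (ρ * Real.sin (θ₂ ρ)) • e₂ := by
      intro ρ hρ
      rw [(hentry ρ hρ).1]; abel
    have hAB : ∀ ρ ∈ Set.Ioo (r - δ) (r + δ),
        A ρ = ρ * Real.cos (θ₂ ρ) ∧ B ρ = ρ * Real.sin (θ₂ ρ) := by
      intro ρ hρ
      constructor
      · show ⟪e₁, γ (sMinus ρ) - γ s⟫ = _
        rw [hdiffpt ρ hρ]; exact hip1 _ _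
      · show ⟪e₂, γ (sMinus ρ) - γ s⟫ = _
        rw [hdiffpt ρ hρ]; exact hip2 _ _
    have hF : HasDerivAt (fun ρ => γ (sMinus ρ) - γ s)
        (deriv sMinus r • deriv γ (sMinus r)) r :=
      ((hγdiff (sMinus r)).hasDerivAt.scomp r hsM.hasDerivAt).sub_const _
    have hAd : HasDerivAt A (-(deriv sMinus r) * Real.cos (θ₂ r + ν₂)) r := by
      have h := (hasDerivAt_const r e₁).inner ℝ hF
      refine h.congr_deriv ?_
      rw [inner_zero_left, add_zero, real_inner_smul_right, htan₂, inner_neg_right, hip1]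
      ring
    have hBd : HasDerivAt B (-(deriv sMinus r) * Real.sin (θ₂ r + ν₂)) r := by
      have h := (hasDerivAt_const r e₂).inner ℝ hF
      refine h.congr_deriv ?_
      rw [inner_zero_left, add_zero, real_inner_smul_right, htan₂, inner_neg_right, hip2]
      ring
    have hev : ∀ ρ ∈ Set.Ioo (r - δ) (r + δ), θ₂ ρ = π + Real.arctan (B ρ / A ρ) := by
      intro ρ hρ
      obtain ⟨hA', hB'⟩ := hAB ρ hρ
      have hρpos : (0:ℝ) < ρ := by have := hρ.1; linarith
      obtain ⟨hl, hu⟩ := hθ₂ ρ hρ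
      have hmem' : θ₂ ρ - π ∈ Set.Ioo (-(π/2)) (π/2) := ⟨by linarith, by linarith⟩
      have hcρ : 0 < Real.cos (θ₂ ρ - π) := Real.cos_pos_of_mem_Ioo hmem'
      have hcρ' : Real.cos (θ₂ ρ) ≠ 0 := by
        rw [Real.cos_sub_pi] at hcρ; intro h; rw [h] at hcρ; simp at hcρ
      have hquot : B ρ / A ρ = Real.tan (θ₂ ρ - π) := by
        rw [hA', hB', Real.tan_eq_sin_div_cos, Real.sin_sub_pi, Real.cos_sub_pi]
        field_simp
      rw [hquot, Real.arctan_tan hmem'.1 hmem'.2]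
      ring
    have habsq : ∀ ρ ∈ Set.Ioo (r - δ) (r + δ), A ρ ^ 2 + B ρ ^ 2 = ρ ^ 2 := by
      intro ρ hρ
      obtain ⟨hA', hB'⟩ := hAB ρ hρ
      rw [hA', hB']
      linear_combination ρ ^ 2 * Real.sin_sq_add_cos_sq (θ₂ ρ)
    have hcos : Real.cos (θ₂ r) ≠ 0 := by
      obtain ⟨hl, hu⟩ := hθ₂ r hrmem
      have hcρ : 0 < Real.cos (θ₂ r - π) :=
        Real.cos_pos_of_mem_Ioo ⟨by linarith, by linarith⟩
      rw [Real.cos_sub_pi] at hcρ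
      intro h; rw [h] at hcρ; simp at hcρ
    exact key18 θ₂ A B r δ π (-(deriv sMinus r)) ν₂ hr hδ hev habsq
      (hAB r hrmem).1 (hAB r hrmem).2 hcos hAd hBd
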